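/- Let σ > 0, θ(r) = (σ²/2 + √(σ⁴/4 + 2σ² r))/σ², and let F be a probability distribution on (0,∞) with discount function h_F. Then ∫₀^∞ θ(r) dF(r) = 1 + (1/(√(2π)σ)) ∫₀^∞ t^{-3/2} e^{-(σ²/8) t} (1 - h_F(t)) dt, assuming finiteness of both sides. -/

import Mathlib

open Real MeasureTheory Set Filter

/-- The positive root `θ(r)` of `(1/2)σ²θ² - (1/2)σ²θ - r = 0`. -/
noncomputable def θfun (σ r : ℝ) : ℝ :=
  (σ^2 / 2 + Real.sqrt (σ^4 / 4 + 2 * σ^2 * r)) / σ^2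

/-- The discount function induced by the weighting distribution `F`. -/
noncomputable def discount (F : Measure ℝ) (t : ℝ) : ℝ := ∫ r, Real.exp (-r * t) ∂F


lemma intA1 {a : ℝ} (ha : 0 < a) :
    IntegrableOn (fun t : ℝ => t ^ (-(3:ℝ)/2) * (1 - Real.exp (-(a*t)))) (Ioi 0) := by
  have hm : AEStronglyMeasurable (fun t : ℝ => t ^ (-(3:ℝ)/2) * (1 - Real.exp (-(a*t))))
      (volume.restrict (Ioi (0:ℝ))) := by
    apply Measurable.aestronglyMeasurable
    fun_prop
  have hkey : ∀ t : ℝ, 0 < t → 0 ≤ 1 - Real.exp (-(a*t)) ∧ 1 - Real.exp (-(a*t)) ≤ a*t := by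
    intro t ht
    constructor
    · have : Real.exp (-(a*t)) ≤ 1 := by
        rw [← Real.exp_zero]
        exact Real.exp_le_exp.mpr (by nlinarith)
      linarith
    · nlinarith [Real.add_one_le_exp (-(a*t)), Real.exp_pos (-(a*t))]
  have h1 : IntegrableOn (fun t : ℝ => t ^ (-(3:ℝ)/2) * (1 - Real.exp (-(a*t)))) (Ioc 0 1) := by
    have hbound : IntegrableOn (fun t : ℝ => a * t ^ (-(1:ℝ)/2)) (Ioc (0:ℝ) 1) := by
      apply Integrable.const_mul
      have := (intervalIntegral.intervalIntegrable_rpow' (a := 0) (b := 1)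
        (r := -(1:ℝ)/2) (by norm_num))
      rwa [intervalIntegrable_iff_integrableOn_Ioc_of_le (by norm_num)] at this
    apply Integrable.mono' hbound (hm.mono_measure (Measure.restrict_mono Ioc_subset_Ioi_self le_rfl))
    filter_upwards [ae_restrict_mem measurableSet_Ioc] with t ht
    obtain ⟨h0, hle⟩ := hkey t ht.1
    rw [Real.norm_eq_abs, abs_mul, abs_of_nonneg (Real.rpow_nonneg ht.1.le _), abs_of_nonneg h0]
    calc t ^ (-(3:ℝ)/2) * (1 - Real.exp (-(a*t))) ≤ t ^ (-(3:ℝ)/2) * (a * t) := by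
          exact mul_le_mul_of_nonneg_left hle (Real.rpow_nonneg ht.1.le _)
      _ = a * t ^ (-(1:ℝ)/2) := by
          rw [show (t : ℝ) ^ (-(1:ℝ)/2) = t ^ (-(3:ℝ)/2) * t ^ (1:ℝ) by
            rw [← Real.rpow_add ht.1]; norm_num]
          rw [Real.rpow_one]; ring
  have h2 : IntegrableOn (fun t : ℝ => t ^ (-(3:ℝ)/2) * (1 - Real.exp (-(a*t)))) (Ioi 1) := by
    have hbound : IntegrableOn (fun t : ℝ => t ^ (-(3:ℝ)/2)) (Ioi (1:ℝ)) :=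
      integrableOn_Ioi_rpow_of_lt (by norm_num) one_pos
    apply Integrable.mono' hbound (hm.mono_measure (Measure.restrict_mono (Ioi_subset_Ioi one_pos.le) le_rfl))
    filter_upwards [ae_restrict_mem measurableSet_Ioi] with t ht
    have ht0 : (0:ℝ) < t := one_pos.trans ht
    obtain ⟨h0, _⟩ := hkey t ht0
    rw [Real.norm_eq_abs, abs_mul, abs_of_nonneg (Real.rpow_nonneg ht0.le _), abs_of_nonneg h0]
    have hexp : Real.exp (-(a*t)) ≥ 0 := (Real.exp_pos _).le
    nlinarith [Real.rpow_nonneg ht0.le (-(3:ℝ)/2)]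
  have := h1.union h2
  rwa [Ioc_union_Ioi_eq_Ioi one_pos.le] at this

-- integrability of the second piece
lemma intA2 {a : ℝ} (ha : 0 < a) :
    IntegrableOn (fun t : ℝ => 2 * a * (t ^ (-(1:ℝ)/2) * Real.exp (-(a*t)))) (Ioi 0) := by
  apply Integrable.const_mul
  have := integrableOn_rpow_mul_exp_neg_mul_rpow (p := 1) (s := -(1:ℝ)/2) (b := a)
    (by norm_num) one_pos ha
  apply this.congr_fun _ measurableSet_Ioi
  intro x hx
  simp

lemma valA {a : ℝ} (ha : 0 < a) :
    ∫ t in Ioi (0:ℝ), t ^ (-(3:ℝ)/2) * (1 - Real.exp (-(a*t)))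
      = 2 * Real.sqrt π * Real.sqrt a := by
  set f : ℝ → ℝ := fun t => -2 * t ^ (-(1:ℝ)/2) * (1 - Real.exp (-(a*t))) with hf
  set f' : ℝ → ℝ := fun t => t ^ (-(3:ℝ)/2) * (1 - Real.exp (-(a*t)))
      - 2 * a * (t ^ (-(1:ℝ)/2) * Real.exp (-(a*t))) with hf'
  have hderiv : ∀ t ∈ Ioi (0:ℝ), HasDerivAt f (f' t) t := by
    intro t ht
    have h1 : HasDerivAt (fun t : ℝ => t ^ (-(1:ℝ)/2)) ((-(1:ℝ)/2) * t ^ (-(3:ℝ)/2)) t := by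
      have h1' := Real.hasDerivAt_rpow_const (x := t) (p := -(1:ℝ)/2)
        (Or.inl (ne_of_gt (mem_Ioi.mp ht)))
      have he : (-(1:ℝ)/2 - 1) = -(3:ℝ)/2 := by norm_num
      rw [he] at h1'
      exact h1'
    have h2 : HasDerivAt (fun t : ℝ => 1 - Real.exp (-(a*t))) (a * Real.exp (-(a*t))) t := by
      have : HasDerivAt (fun t : ℝ => -(a*t)) (-a) t := by
        simpa using ((hasDerivAt_id t).const_mul a).fun_neg
      have := (Real.hasDerivAt_exp (-(a*t))).comp t this
      simpa [mul_comm] using ((hasDerivAt_const t (1:ℝ)).fun_sub this)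
    have := ((h1.const_mul (-2)).fun_mul h2)
    refine this.congr_deriv ?_
    simp only [hf']
    ring
  have hint : IntegrableOn f' (Ioi (0:ℝ)) := (intA1 ha).sub (intA2 ha)
  have hcont : ContinuousWithinAt f (Ici 0) 0 := by
    have hbnd : ∀ t ∈ Ici (0:ℝ), -2 * a * t ^ ((1:ℝ)/2) ≤ f t ∧ f t ≤ 0 := by
      intro t ht
      rcases eq_or_lt_of_le (mem_Ici.mp ht) with h | h
      · subst h
        simp [hf, Real.zero_rpow (by norm_num : (-(1:ℝ)/2) ≠ 0),
          Real.zero_rpow (by norm_num : ((1:ℝ)/2) ≠ 0)]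
      · have h0 : 0 ≤ 1 - Real.exp (-(a*t)) := by
          have : Real.exp (-(a*t)) ≤ 1 := by
            rw [← Real.exp_zero]; exact Real.exp_le_exp.mpr (by nlinarith)
          linarith
        have hle : 1 - Real.exp (-(a*t)) ≤ a*t :=
          by nlinarith [Real.add_one_le_exp (-(a*t))]
        have hr : (0:ℝ) ≤ t ^ (-(1:ℝ)/2) := Real.rpow_nonneg h.le _
        constructor
        · have : t ^ (-(1:ℝ)/2) * (1 - Real.exp (-(a*t))) ≤ t ^ (-(1:ℝ)/2) * (a*t) :=
            mul_le_mul_of_nonneg_left hle hr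
          have h2 : t ^ (-(1:ℝ)/2) * t = t ^ ((1:ℝ)/2) := by
            rw [show (t:ℝ) ^ ((1:ℝ)/2) = t ^ (-(1:ℝ)/2 + 1) by norm_num,
              Real.rpow_add h, Real.rpow_one]
          simp only [hf]
          nlinarith
        · simp only [hf]
          nlinarith
    have hlow : Tendsto (fun t : ℝ => -2 * a * t ^ ((1:ℝ)/2)) (nhdsWithin 0 (Ici 0)) (nhds 0) := by
      have : ContinuousAt (fun t : ℝ => t ^ ((1:ℝ)/2)) 0 := by
        apply Real.continuousAt_rpow_const
        right; norm_num
      have := (this.tendsto.const_mul (-2*a)).mono_left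
        (nhdsWithin_le_nhds (s := Ici (0:ℝ)))
      simpa [Real.zero_rpow (by norm_num : ((1:ℝ)/2) ≠ 0)] using this
    have hf0 : f 0 = 0 := by
      simp [hf, Real.zero_rpow (by norm_num : (-(1:ℝ)/2) ≠ 0)]
    rw [ContinuousWithinAt, hf0]
    apply tendsto_of_tendsto_of_tendsto_of_le_of_le' hlow tendsto_const_nhds
    · filter_upwards [self_mem_nhdsWithin] with t ht using (hbnd t ht).1
    · filter_upwards [self_mem_nhdsWithin] with t ht using (hbnd t ht).2
  have htop : Tendsto f atTop (nhds 0) := by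
    have hlow : Tendsto (fun t : ℝ => -2 * t ^ (-(1:ℝ)/2)) atTop (nhds 0) := by
      have := (tendsto_rpow_neg_atTop (by norm_num : (0:ℝ) < 1/2)).const_mul (-2)
      simpa [neg_div] using this
    apply tendsto_of_tendsto_of_tendsto_of_le_of_le' hlow tendsto_const_nhds
    · filter_upwards [Filter.eventually_gt_atTop (0:ℝ)] with t ht
      have h1 : 1 - Real.exp (-(a*t)) ≤ 1 := by
        have := Real.exp_pos (-(a*t)); linarith
      have hr : (0:ℝ) ≤ t ^ (-(1:ℝ)/2) := Real.rpow_nonneg ht.le _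
      simp only [hf]; nlinarith
    · filter_upwards [Filter.eventually_gt_atTop (0:ℝ)] with t ht
      have h0 : 0 ≤ 1 - Real.exp (-(a*t)) := by
        have : Real.exp (-(a*t)) ≤ 1 := by
          rw [← Real.exp_zero]; exact Real.exp_le_exp.mpr (by nlinarith)
        linarith
      have hr : (0:ℝ) ≤ t ^ (-(1:ℝ)/2) := Real.rpow_nonneg ht.le _
      simp only [hf]; nlinarith
  have hFTC := MeasureTheory.integral_Ioi_of_hasDerivAt_of_tendsto hcont hderiv hint htop
  have hf0 : f 0 = 0 := by
    simp [hf, Real.zero_rpow (by norm_num : (-(1:ℝ)/2) ≠ 0)]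
  rw [hf0, sub_zero] at hFTC
  have hsplit : ∫ t in Ioi (0:ℝ), f' t
      = (∫ t in Ioi (0:ℝ), t ^ (-(3:ℝ)/2) * (1 - Real.exp (-(a*t))))
        - ∫ t in Ioi (0:ℝ), 2 * a * (t ^ (-(1:ℝ)/2) * Real.exp (-(a*t))) :=
    integral_sub (intA1 ha) (intA2 ha)
  have hGamma : ∫ t in Ioi (0:ℝ), t ^ (-(1:ℝ)/2) * Real.exp (-(a*t))
      = (1/a) ^ ((1:ℝ)/2) * Real.Gamma (1/2) := by
    have := Real.integral_rpow_mul_exp_neg_mul_Ioi (a := (1:ℝ)/2) (r := a) (by norm_num) ha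
    convert this using 2 with t
    norm_num
  have hval : ∫ t in Ioi (0:ℝ), 2 * a * (t ^ (-(1:ℝ)/2) * Real.exp (-(a*t)))
      = 2 * Real.sqrt π * Real.sqrt a := by
    rw [integral_const_mul, hGamma, Real.Gamma_one_half_eq]
    have h1 : ((1:ℝ)/a) ^ ((1:ℝ)/2) = 1 / Real.sqrt a := by
      rw [← Real.sqrt_eq_rpow, one_div, Real.sqrt_inv, one_div]
    rw [h1]
    have : 2 * a * (1 / Real.sqrt a * Real.sqrt π) = 2 * Real.sqrt π * (a / Real.sqrt a) := by
      ring
    rw [this, Real.div_sqrt]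
  linarith [hFTC, hsplit, hval]

lemma gdecomp {σ r : ℝ} (t : ℝ) :
    t ^ (-(3:ℝ)/2) * Real.exp (-(σ^2/8) * t) * (1 - Real.exp (-r * t))
      = t ^ (-(3:ℝ)/2) * (1 - Real.exp (-((σ^2/8 + r)*t)))
        - t ^ (-(3:ℝ)/2) * (1 - Real.exp (-(σ^2/8*t))) := by
  have h : Real.exp (-((σ^2/8 + r)*t)) = Real.exp (-(σ^2/8) * t) * Real.exp (-r * t) := by
    rw [← Real.exp_add]; ring_nf
  rw [h]; ring_nf

lemma intC {σ : ℝ} (hσ : 0 < σ) {r : ℝ} (hr : 0 ≤ r) :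
    IntegrableOn (fun t : ℝ =>
      t ^ (-(3:ℝ)/2) * Real.exp (-(σ^2/8) * t) * (1 - Real.exp (-r * t))) (Ioi 0) := by
  have h1 := intA1 (a := σ^2/8 + r) (by positivity)
  have h2 := intA1 (a := σ^2/8) (by positivity)
  have h12 := h1.sub h2
  apply h12.congr (Filter.Eventually.of_forall fun t => ?_)
  simpa using (gdecomp (σ := σ) (r := r) t).symm

lemma theta_ge_one {σ : ℝ} (hσ : 0 < σ) {r : ℝ} (hr : 0 ≤ r) : 1 ≤ θfun σ r := by
  unfold θfun
  rw [le_div_iff₀ (by positivity), one_mul]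
  have : σ^2/2 ≤ Real.sqrt (σ^4/4 + 2*σ^2*r) := by
    rw [show σ^2/2 = Real.sqrt ((σ^2/2)^2) by rw [Real.sqrt_sq (by positivity)]]
    apply Real.sqrt_le_sqrt; nlinarith
  linarith

lemma valC {σ : ℝ} (hσ : 0 < σ) {r : ℝ} (hr : 0 ≤ r) :
    ∫ t in Ioi (0:ℝ), t ^ (-(3:ℝ)/2) * Real.exp (-(σ^2/8) * t) * (1 - Real.exp (-r * t))
      = (θfun σ r - 1) * (Real.sqrt (2*π) * σ) := by
  have h1 := intA1 (a := σ^2/8 + r) (by positivity)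
  have h2 := intA1 (a := σ^2/8) (by positivity)
  rw [show (fun t : ℝ => t ^ (-(3:ℝ)/2) * Real.exp (-(σ^2/8) * t) * (1 - Real.exp (-r * t)))
      = fun t : ℝ => t ^ (-(3:ℝ)/2) * (1 - Real.exp (-((σ^2/8 + r)*t)))
        - t ^ (-(3:ℝ)/2) * (1 - Real.exp (-(σ^2/8*t))) from funext gdecomp,
    integral_sub h1 h2, valA (by positivity), valA (by positivity)]
  -- algebra
  unfold θfun
  have hq : Real.sqrt 2 * Real.sqrt 2 = 2 := Real.mul_self_sqrt (by norm_num)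
  have hq0 : (0:ℝ) < Real.sqrt 2 := Real.sqrt_pos.mpr (by norm_num)
  have hs1 : Real.sqrt (σ^4/4 + 2*σ^2*r) = σ * Real.sqrt (σ^2/4 + 2*r) := by
    rw [show σ^4/4 + 2*σ^2*r = σ^2 * (σ^2/4 + 2*r) by ring,
      Real.sqrt_mul (sq_nonneg σ), Real.sqrt_sq hσ.le]
  have hs2 : Real.sqrt (σ^2/8 + r) = Real.sqrt (σ^2/4 + 2*r) / Real.sqrt 2 := by
    rw [show σ^2/8 + r = (σ^2/4 + 2*r)/2 by ring, Real.sqrt_div (by positivity)]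
  have hs3 : Real.sqrt (σ^2/8) = σ / (2 * Real.sqrt 2) := by
    rw [show σ^2/8 = ((σ/2)^2)/2 by ring, Real.sqrt_div (by positivity),
      Real.sqrt_sq (by positivity)]
    ring
  have hs4 : Real.sqrt (2*π) = Real.sqrt 2 * Real.sqrt π :=
    Real.sqrt_mul (by norm_num) π
  rw [hs1, hs2, hs3, hs4]
  have hσ0 : σ ≠ 0 := ne_of_gt hσ
  set s := Real.sqrt (σ^2/4 + 2*r) with hs
  set p := Real.sqrt π with hp
  set q := Real.sqrt 2 with hqd
  have hq0' : q ≠ 0 := ne_of_gt hq0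
  field_simp
  linear_combination (-p*(2*s-σ)) * hq

theorem stmt11 (σ : ℝ) (hσ : 0 < σ) (F : Measure ℝ) [IsProbabilityMeasure F]
    (hFc : F (Ioi (0:ℝ))ᶜ = 0)
    (hInt1 : Integrable (θfun σ) F)
    (hInt2 : IntegrableOn
      (fun t => t ^ (-(3:ℝ)/2) * Real.exp (-(σ^2/8) * t) * (1 - discount F t)) (Ioi (0:ℝ))) :
    ∫ r, θfun σ r ∂F =
      1 + (1 / (Real.sqrt (2*π) * σ)) *
        ∫ t in Ioi (0:ℝ), t ^ (-(3:ℝ)/2) * Real.exp (-(σ^2/8) * t) * (1 - discount F t) := by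
  set C : ℝ := Real.sqrt (2*π) * σ with hCdef
  have hC : 0 < C := by
    have := Real.pi_pos
    positivity
  set g : ℝ → ℝ → ℝ := fun r t =>
    t ^ (-(3:ℝ)/2) * Real.exp (-(σ^2/8) * t) * (1 - Real.exp (-r * t)) with hgdef
  have haeF : ∀ᵐ r ∂F, 0 < r := by
    have hset : {r : ℝ | ¬ 0 < r} = (Ioi (0:ℝ))ᶜ := by ext x; simp [mem_Ioi]
    rw [ae_iff, hset]; exact hFc
  -- nonnegativity of g
  have hgnn : ∀ r t : ℝ, 0 < r → 0 < t → 0 ≤ g r t := by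
    intro r t hr ht
    have h1 : Real.exp (-r * t) ≤ 1 := by
      rw [← Real.exp_zero]; exact Real.exp_le_exp.mpr (by nlinarith)
    have := Real.rpow_nonneg ht.le (-(3:ℝ)/2)
    have := (Real.exp_pos (-(σ^2/8) * t)).le
    simp only [hgdef]
    have h2 : (0:ℝ) ≤ 1 - Real.exp (-r * t) := by linarith
    positivity
  have hmeasg : Measurable (fun p : ℝ × ℝ => ENNReal.ofReal (g p.1 p.2)) := by
    apply Measurable.ennreal_ofReal
    simp only [hgdef]
    fun_prop
  -- integrability of exp(-r t) in r
  have hdisc_int : ∀ t : ℝ, 0 < t → Integrable (fun r => Real.exp (-r * t)) F := by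
    intro t ht
    apply Integrable.mono' (integrable_const (1:ℝ))
      ((by fun_prop : Measurable fun r : ℝ => Real.exp (-r*t)).aestronglyMeasurable)
    filter_upwards [haeF] with r hr
    rw [Real.norm_eq_abs, abs_of_pos (Real.exp_pos _), ← Real.exp_zero]
    exact Real.exp_le_exp.mpr (by nlinarith)
  have hdisc_le : ∀ t : ℝ, 0 < t → discount F t ≤ 1 := by
    intro t ht
    have := integral_mono_ae (hdisc_int t ht) (integrable_const (1:ℝ))
      (by filter_upwards [haeF] with r hr
          rw [← Real.exp_zero]; exact Real.exp_le_exp.mpr (by nlinarith))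
    simpa [discount] using this
  have hθint' : Integrable (fun r => (θfun σ r - 1) * C) F :=
    (hInt1.sub (integrable_const 1)).mul_const C
  have nnθ : 0 ≤ᵐ[F] fun r => (θfun σ r - 1) * C := by
    filter_upwards [haeF] with r hr
    exact mul_nonneg (sub_nonneg.2 (theta_ge_one hσ hr.le)) hC.le
  -- per-r evaluation
  have K1 : ∀ᵐ r ∂F, ENNReal.ofReal ((θfun σ r - 1) * C)
      = ∫⁻ t in Ioi (0:ℝ), ENNReal.ofReal (g r t) := by
    filter_upwards [haeF] with r hr
    rw [← valC hσ hr.le]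
    apply MeasureTheory.ofReal_integral_eq_lintegral_ofReal (intC hσ hr.le)
    filter_upwards [ae_restrict_mem measurableSet_Ioi] with t ht
    exact hgnn r t hr ht
  -- E1 : lintegral over r equals ofReal of the θ integral
  have E1 : ∫⁻ r, (∫⁻ t in Ioi (0:ℝ), ENNReal.ofReal (g r t)) ∂F
      = ENNReal.ofReal (∫ r, (θfun σ r - 1) * C ∂F) := by
    rw [MeasureTheory.ofReal_integral_eq_lintegral_ofReal hθint' nnθ]
    exact (lintegral_congr_ae (K1.mono fun r h => h.symm))
  -- swap
  have E2 : ∫⁻ r, (∫⁻ t in Ioi (0:ℝ), ENNReal.ofReal (g r t)) ∂F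
      = ∫⁻ t in Ioi (0:ℝ), (∫⁻ r, ENNReal.ofReal (g r t) ∂F) := by
    exact lintegral_lintegral_swap hmeasg.aemeasurable
  -- per-t evaluation
  have E3 : ∀ᵐ t ∂(volume.restrict (Ioi (0:ℝ))),
      (∫⁻ r, ENNReal.ofReal (g r t) ∂F)
        = ENNReal.ofReal (t ^ (-(3:ℝ)/2) * Real.exp (-(σ^2/8) * t) * (1 - discount F t)) := by
    filter_upwards [ae_restrict_mem measurableSet_Ioi] with t ht
    have hint : Integrable (fun r => g r t) F := by
      have := ((integrable_const (1:ℝ)).sub (hdisc_int t ht)).const_mul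
        (t ^ (-(3:ℝ)/2) * Real.exp (-(σ^2/8) * t))
      apply this.congr (Filter.Eventually.of_forall fun r => ?_)
      simp only [hgdef, Pi.sub_apply]
    rw [← MeasureTheory.ofReal_integral_eq_lintegral_ofReal hint
      (by filter_upwards [haeF] with r hr; exact hgnn r t hr ht)]
    congr 1
    simp only [hgdef]
    rw [show (fun r : ℝ => t ^ (-(3:ℝ)/2) * Real.exp (-(σ^2/8) * t) * (1 - Real.exp (-r * t)))
        = fun r : ℝ => (t ^ (-(3:ℝ)/2) * Real.exp (-(σ^2/8) * t)) * (1 - Real.exp (-r * t))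
        from rfl, integral_const_mul,
      integral_sub (integrable_const 1) (hdisc_int t ht), integral_const]
    simp [discount]
  -- E4 : conclude
  have nn2 : 0 ≤ᵐ[volume.restrict (Ioi (0:ℝ))]
      fun t => t ^ (-(3:ℝ)/2) * Real.exp (-(σ^2/8) * t) * (1 - discount F t) := by
    filter_upwards [ae_restrict_mem measurableSet_Ioi] with t ht
    have h1 := hdisc_le t ht
    have h2 : (0:ℝ) ≤ 1 - discount F t := by linarith
    have := Real.rpow_nonneg (le_of_lt (mem_Ioi.mp ht)) (-(3:ℝ)/2)
    positivity
  have E4 : ∫⁻ t in Ioi (0:ℝ), (∫⁻ r, ENNReal.ofReal (g r t) ∂F)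
      = ENNReal.ofReal (∫ t in Ioi (0:ℝ),
          t ^ (-(3:ℝ)/2) * Real.exp (-(σ^2/8) * t) * (1 - discount F t)) := by
    rw [MeasureTheory.ofReal_integral_eq_lintegral_ofReal hInt2 nn2]
    exact lintegral_congr_ae E3
  have key : ∫ r, (θfun σ r - 1) * C ∂F
      = ∫ t in Ioi (0:ℝ), t ^ (-(3:ℝ)/2) * Real.exp (-(σ^2/8) * t) * (1 - discount F t) := by
    have h := E1.symm.trans (E2.trans E4)
    exact (ENNReal.ofReal_eq_ofReal_iff (integral_nonneg_of_ae nnθ)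
      (integral_nonneg_of_ae nn2)).mp h
  have hsub : ∫ r, (θfun σ r - 1) * C ∂F = (∫ r, θfun σ r ∂F - 1) * C := by
    rw [integral_mul_const, integral_sub hInt1 (integrable_const 1), integral_const]
    simp
  rw [hsub] at key
  have hCne : C ≠ 0 := ne_of_gt hC
  have h5 : ∫ r, θfun σ r ∂F - 1
      = (∫ t in Ioi (0:ℝ), t ^ (-(3:ℝ)/2) * Real.exp (-(σ^2/8) * t) * (1 - discount F t)) / C :=
    (eq_div_iff hCne).mpr key
  rw [div_mul_eq_mul_div, one_mul]
  linarith [h5]
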